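/- Fix an integer N ≥ 1, a real σ > 0, and cost functions c_A, c_B : {0,…,N} → ℝ. Define g(m) = Φ_σ(c_B(N−m) − c_A(m)) for m ∈ {0,…,N} and f : [0,1] → [0,1] by f(x) = Σ_{m=0}^{N} g(m)·(N choose m)·x^m·(1−x)^{N−m}. Assume N·max_{0 ≤ m ≤ N−1} |g(m+1) − g(m)| < 1. Then f has a unique fixed point x* ∈ [0,1], and for every initial condition x_1 ∈ [0,1], the sequence defined by x_t = f(x_{t−1}) for t ≥ 2 converges to x* as t → ∞. -/

import Mathlib

open MeasureTheory ProbabilityTheory Finset Filter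

/-- `Phi σ x` is the cumulative distribution function of the Gaussian
distribution `N(0, σ²)` evaluated at `x`. -/
noncomputable def Phi (σ : ℝ) (x : ℝ) : ℝ :=
  ((gaussianReal 0 (Real.toNNReal (σ ^ 2))) (Set.Iic x)).toReal

private lemma bern_sum_one (n : ℕ) (x : ℝ) :
    ∑ m ∈ Finset.range (n+1), (n.choose m : ℝ) * x ^ m * (1-x) ^ (n-m) = 1 := by
  have h : ∑ m ∈ Finset.range (n+1), (n.choose m : ℝ) * x ^ m * (1-x) ^ (n-m)
      = (x + (1-x))^n := by
    rw [add_pow]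
    exact Finset.sum_congr rfl fun m _ => by ring
  rw [h]
  norm_num

private lemma hasDerivAt_term (c : ℝ) (m n : ℕ) (x : ℝ) :
    HasDerivAt (fun y : ℝ => c * ((n.choose m : ℝ) * y ^ m * (1 - y) ^ (n - m)))
      (c * (n.choose m : ℝ) * ((m : ℝ) * x ^ (m-1) * (1-x) ^ (n-m)
        - ((n-m : ℕ) : ℝ) * x ^ m * (1-x) ^ (n-m-1))) x := by
  have hu := hasDerivAt_pow m x
  have h1 : HasDerivAt (fun y : ℝ => 1 - y) (-1 : ℝ) x := by
    simpa using (hasDerivAt_id x).const_sub 1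
  have hv := h1.pow (n-m)
  have h := (hu.mul hv).const_mul (c * (n.choose m : ℝ))
  have hfun : (fun y : ℝ => c * ((n.choose m : ℝ) * y ^ m * (1 - y) ^ (n - m)))
      = fun y : ℝ => (c * (n.choose m : ℝ)) * (y ^ m * (1 - y) ^ (n - m)) := by
    funext y; ring
  rw [hfun]
  refine h.congr_deriv ?_
  simp only [Pi.pow_apply]
  ring

private lemma hasDerivAt_f (N : ℕ) (hN : 1 ≤ N) (g : ℕ → ℝ) (x : ℝ) :
    HasDerivAt (fun y : ℝ => ∑ m ∈ Finset.range (N+1),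
        g m * ((N.choose m : ℝ) * y ^ m * (1 - y) ^ (N - m)))
      ((N:ℝ) * ∑ m ∈ Finset.range N,
        (g (m+1) - g m) * (((N-1).choose m : ℝ) * x ^ m * (1-x) ^ (N-1-m))) x := by
  have h : HasDerivAt (fun y : ℝ => ∑ m ∈ Finset.range (N+1),
        g m * ((N.choose m : ℝ) * y ^ m * (1 - y) ^ (N - m)))
      (∑ m ∈ Finset.range (N+1), g m * (N.choose m : ℝ) *
        ((m : ℝ) * x ^ (m-1) * (1-x) ^ (N-m)
          - ((N-m : ℕ) : ℝ) * x ^ m * (1-x) ^ (N-m-1))) x :=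
    HasDerivAt.fun_sum (fun m _ => hasDerivAt_term (g m) m N x)
  convert h using 1
  have hsplit : (∑ m ∈ Finset.range (N+1), g m * (N.choose m : ℝ) *
        ((m : ℝ) * x ^ (m-1) * (1-x) ^ (N-m)
          - ((N-m : ℕ) : ℝ) * x ^ m * (1-x) ^ (N-m-1)))
      = (∑ m ∈ Finset.range (N+1), g m * (N.choose m : ℝ) *
          ((m : ℝ) * x ^ (m-1) * (1-x) ^ (N-m)))
        - (∑ m ∈ Finset.range (N+1), g m * (N.choose m : ℝ) *
          (((N-m : ℕ) : ℝ) * x ^ m * (1-x) ^ (N-m-1))) := by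
    rw [← Finset.sum_sub_distrib]
    exact Finset.sum_congr rfl fun m _ => by ring
  rw [hsplit, Finset.sum_range_succ', Finset.sum_range_succ]
  simp only [Nat.cast_zero, Nat.sub_self, Nat.cast_ofNat, zero_mul, mul_zero, add_zero,
    Nat.cast_zero, sub_zero]
  rw [Finset.mul_sum, ← Finset.sum_sub_distrib]
  refine Finset.sum_congr rfl fun m hm => ?_
  have hmN : m < N := Finset.mem_range.mp hm
  have hN1 : N - 1 + 1 = N := by omega
  have c1n : N * (N-1).choose m = N.choose (m+1) * (m+1) := by
    have := Nat.add_one_mul_choose_eq (N-1) m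
    rwa [hN1] at this
  have c2n : N.choose (m+1) * (m+1) = N.choose m * (N - m) := Nat.choose_succ_right_eq N m
  have c1 : (N : ℝ) * ((N-1).choose m : ℝ) = (N.choose (m+1) : ℝ) * ((m:ℝ)+1) := by
    exact_mod_cast c1n
  have c2 : (N.choose (m+1) : ℝ) * ((m:ℝ)+1) = (N.choose m : ℝ) * ((N - m : ℕ) : ℝ) := by
    exact_mod_cast c2n
  have e1 : N - 1 - m = N - (m+1) := by omega
  have e2 : N - m - 1 = N - (m+1) := by omega
  have e3 : m + 1 - 1 = m := by omega
  rw [e1, e2, e3]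
  push_cast
  linear_combination (g (m+1) * x^m * (1-x)^(N-(m+1))) * c1
    - (g m * x^m * (1-x)^(N-(m+1))) * (c1.trans c2)

/-- Convergence of the expected population profile under σ-scalar signalling:
with `g(m) = Φ_σ(c_B(N−m) − c_A(m))` and
`f(x) = Σ_{m=0}^{N} g(m)·(N choose m)·x^m·(1−x)^{N−m}`, if
`N·max_{0 ≤ m ≤ N−1} |g(m+1) − g(m)| < 1` then `f` has a unique fixed point
`x* ∈ [0,1]` and the iterates `x_t = f(x_{t−1})` converge to `x*` from every
initial condition `x₁ ∈ [0,1]`. -/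
theorem population_profile_convergence
    (N : ℕ) (hN : 1 ≤ N) (σ : ℝ) (hσ : 0 < σ)
    (cA cB : ℕ → ℝ)
    (g : ℕ → ℝ) (hg : ∀ m, g m = Phi σ (cB (N - m) - cA m))
    (f : ℝ → ℝ)
    (hf : ∀ y : ℝ, f y = ∑ m ∈ Finset.range (N + 1),
      g m * ((N.choose m : ℝ) * y ^ m * (1 - y) ^ (N - m)))
    (hcontr :
      (N : ℝ) * ((Finset.range N).sup'
          (Finset.nonempty_range_iff.mpr (Nat.one_le_iff_ne_zero.mp hN))
          (fun m => |g (m + 1) - g m|)) < 1) :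
    ∃ xstar ∈ Set.Icc (0 : ℝ) 1,
      f xstar = xstar ∧
      (∀ y ∈ Set.Icc (0 : ℝ) 1, f y = y → y = xstar) ∧
      ∀ x1 ∈ Set.Icc (0 : ℝ) 1,
        Tendsto (fun t : ℕ => f^[t] x1) atTop (nhds xstar) := by
  have hfe : f = fun y : ℝ => ∑ m ∈ Finset.range (N+1),
      g m * ((N.choose m : ℝ) * y ^ m * (1 - y) ^ (N - m)) := funext hf
  set M : ℝ := (Finset.range N).sup'
      (Finset.nonempty_range_iff.mpr (Nat.one_le_iff_ne_zero.mp hN))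
      (fun m => |g (m + 1) - g m|) with hMdef
  have hM0 : 0 ≤ M := by
    have h := Finset.le_sup' (fun m => |g (m + 1) - g m|)
      (Finset.mem_range.mpr (show 0 < N by omega))
    exact le_trans (abs_nonneg _) h
  have hKnn : 0 ≤ (N:ℝ) * M := mul_nonneg (Nat.cast_nonneg _) hM0
  -- bounds on g
  have hg0 : ∀ m, 0 ≤ g m := fun m => by rw [hg]; exact ENNReal.toReal_nonneg
  have hg1 : ∀ m, g m ≤ 1 := fun m => by
    rw [hg]
    exact ENNReal.toReal_le_of_le_ofReal zero_le_one
      (by rw [ENNReal.ofReal_one]; exact prob_le_one)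
  -- f maps [0,1] to [0,1]
  have hmaps : Set.MapsTo f (Set.Icc (0:ℝ) 1) (Set.Icc (0:ℝ) 1) := by
    intro y hy
    obtain ⟨hy0, hy1⟩ := hy
    have hw : ∀ m, 0 ≤ (N.choose m : ℝ) * y ^ m * (1-y) ^ (N-m) := fun m =>
      mul_nonneg (mul_nonneg (Nat.cast_nonneg _) (pow_nonneg hy0 _))
        (pow_nonneg (by linarith) _)
    constructor
    · rw [hf]
      exact Finset.sum_nonneg fun m _ => mul_nonneg (hg0 m) (hw m)
    · rw [hf]
      calc ∑ m ∈ Finset.range (N+1), g m * ((N.choose m : ℝ) * y ^ m * (1-y) ^ (N-m))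
          ≤ ∑ m ∈ Finset.range (N+1), (N.choose m : ℝ) * y ^ m * (1-y) ^ (N-m) :=
            Finset.sum_le_sum fun m _ => mul_le_of_le_one_left (hw m) (hg1 m)
        _ = 1 := bern_sum_one N y
  -- derivative bound
  set D : ℝ → ℝ := fun x => (N:ℝ) * ∑ m ∈ Finset.range N,
      (g (m+1) - g m) * (((N-1).choose m : ℝ) * x ^ m * (1-x) ^ (N-1-m)) with hDdef
  have hbound : ∀ x ∈ Set.Icc (0:ℝ) 1, ‖D x‖ ≤ (N:ℝ) * M := by
    intro x hx
    obtain ⟨hx0, hx1⟩ := hx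
    rw [Real.norm_eq_abs, hDdef, abs_mul, Nat.abs_cast]
    refine mul_le_mul_of_nonneg_left ?_ (Nat.cast_nonneg _)
    calc |∑ m ∈ Finset.range N,
          (g (m+1) - g m) * (((N-1).choose m : ℝ) * x ^ m * (1-x) ^ (N-1-m))|
        ≤ ∑ m ∈ Finset.range N,
          |(g (m+1) - g m) * (((N-1).choose m : ℝ) * x ^ m * (1-x) ^ (N-1-m))| :=
          Finset.abs_sum_le_sum_abs _ _
      _ ≤ ∑ m ∈ Finset.range N, M * (((N-1).choose m : ℝ) * x ^ m * (1-x) ^ (N-1-m)) := by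
          refine Finset.sum_le_sum fun m hm => ?_
          have hwnn : 0 ≤ ((N-1).choose m : ℝ) * x ^ m * (1-x) ^ (N-1-m) :=
            mul_nonneg (mul_nonneg (Nat.cast_nonneg _) (pow_nonneg hx0 _))
              (pow_nonneg (by linarith) _)
          rw [abs_mul, abs_of_nonneg hwnn]
          exact mul_le_mul_of_nonneg_right
            (Finset.le_sup' (fun m => |g (m + 1) - g m|) hm) hwnn
      _ = M := by
          rw [← Finset.mul_sum]
          have h1 : ∑ m ∈ Finset.range N,
              ((N-1).choose m : ℝ) * x ^ m * (1-x) ^ (N-1-m) = 1 := by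
            have := bern_sum_one (N-1) x
            rwa [(by omega : N - 1 + 1 = N)] at this
          rw [h1, mul_one]
  -- Lipschitz constant
  set K : NNReal := Real.toNNReal ((N:ℝ) * M) with hKdef
  have hK1 : K < 1 := by
    rw [hKdef, ← Real.toNNReal_one]
    exact (Real.toNNReal_lt_toNNReal_iff (by norm_num)).mpr hcontr
  have hlip : LipschitzOnWith K f (Set.Icc (0:ℝ) 1) := by
    refine Convex.lipschitzOnWith_of_nnnorm_hasDerivWithin_le (f' := D) (convex_Icc 0 1)
      (fun x _ => ?_) (fun x hx => ?_)
    · rw [hfe]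
      exact (hasDerivAt_f N hN g x).hasDerivWithinAt
    · rw [← NNReal.coe_le_coe, coe_nnnorm, hKdef, Real.coe_toNNReal _ hKnn]
      exact hbound x hx
  -- contraction on the subtype
  haveI : CompleteSpace (Set.Icc (0:ℝ) 1) := isClosed_Icc.completeSpace_coe
  haveI : Nonempty (Set.Icc (0:ℝ) 1) := ⟨⟨0, by norm_num⟩⟩
  set F : Set.Icc (0:ℝ) 1 → Set.Icc (0:ℝ) 1 := hmaps.restrict f _ _ with hFdef
  have hFval : ∀ z : Set.Icc (0:ℝ) 1, (F z : ℝ) = f z := fun z => rfl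
  have hFlip : LipschitzWith K F := LipschitzWith.of_dist_le_mul fun a b => by
    rw [Subtype.dist_eq, Subtype.dist_eq, hFval, hFval]
    exact hlip.dist_le_mul a.1 a.2 b.1 b.2
  have cw : ContractingWith K F := ⟨hK1, hFlip⟩
  set pt : Set.Icc (0:ℝ) 1 := ContractingWith.fixedPoint F cw with hptdef
  have hfixpt : F pt = pt := cw.fixedPoint_isFixedPt
  refine ⟨(pt : ℝ), pt.2, ?_, ?_, ?_⟩
  · rw [← hFval]; exact congrArg Subtype.val hfixpt
  · intro y hy hyfix
    have : F ⟨y, hy⟩ = ⟨y, hy⟩ := Subtype.ext (by rw [hFval]; exact hyfix)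
    exact congrArg Subtype.val (cw.fixedPoint_unique this)
  · intro x1 hx1
    have hiter : ∀ t (z : Set.Icc (0:ℝ) 1), ((F^[t] z : Set.Icc (0:ℝ) 1) : ℝ) = f^[t] (z : ℝ) := by
      intro t
      induction t with
      | zero => intro z; simp
      | succ t ih =>
        intro z
        rw [Function.iterate_succ_apply', Function.iterate_succ_apply', hFval, ih]
    have hT := cw.tendsto_iterate_fixedPoint ⟨x1, hx1⟩
    have hT2 : Tendsto (fun t : ℕ => ((F^[t] ⟨x1, hx1⟩ : Set.Icc (0:ℝ) 1) : ℝ)) atTop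
        (nhds (pt : ℝ)) := (continuous_subtype_val.tendsto pt).comp hT
    simpa only [hiter] using hT2
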